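/- Let Φ be an irreducible root system with extended set of simple roots Δ̃ and coroot integers g_a. Let Ĩ be a proper subset of Δ̃, let Q^∨ be the full coroot lattice and Q^∨_Ĩ the sublattice spanned by { a^∨ : a ∈ Ĩ }. Then the torsion subgroup of Q^∨/Q^∨_Ĩ is cyclic of order k = gcd{ g_a : a ∉ Ĩ }, generated by the class of ζ = −(1/k) ∑_{a∈Ĩ} g_a a^∨. -/

import Mathlib

set_option linter.unusedSectionVars false
set_option maxHeartbeats 1000000


open scoped RealInnerProductSpace

variable {V : Type*}

/-- The coroot `a^∨ = 2a/⟪a,a⟫` of a vector `a`, with respect to the inner product. -/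
noncomputable def coroot [NormedAddCommGroup V] [InnerProductSpace ℝ V] (a : V) : V :=
  (2 / ⟪a, a⟫) • a

/-- A (possibly non-reduced) root system on an inner product space: a finite spanning
set of nonzero vectors, integrality of the Cartan numbers `⟪b, a^∨⟫`, and closure
under the reflections `b ↦ b − ⟪b, a^∨⟫ a`. -/
def IsRootSystem [NormedAddCommGroup V] [InnerProductSpace ℝ V] (Φ : Set V) : Prop :=
  Φ.Finite ∧ (0 : V) ∉ Φ ∧ Submodule.span ℝ Φ = ⊤ ∧
    (∀ a ∈ Φ, ∀ b ∈ Φ, ∃ n : ℤ, ⟪b, coroot a⟫ = (n : ℝ)) ∧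
    (∀ a ∈ Φ, ∀ b ∈ Φ, b - ⟪b, coroot a⟫ • a ∈ Φ)

/-- A root system is reduced if the only multiples of a root `a` in it are `±a`. -/
def IsReducedRS [NormedAddCommGroup V] [InnerProductSpace ℝ V] (Φ : Set V) : Prop :=
  ∀ a ∈ Φ, ∀ t : ℝ, t • a ∈ Φ → t = 1 ∨ t = -1

/-- A root system is irreducible if it is nonempty and cannot be partitioned into two
nonempty mutually orthogonal subsets. -/
def IsIrreducibleRS [NormedAddCommGroup V] [InnerProductSpace ℝ V] (Φ : Set V) : Prop :=
  Φ.Nonempty ∧ ∀ Φ₁ Φ₂ : Set V, Φ = Φ₁ ∪ Φ₂ →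
    (∀ a ∈ Φ₁, ∀ b ∈ Φ₂, ⟪a, b⟫ = 0) → Φ₁ = ∅ ∨ Φ₂ = ∅

section Aux

variable {ι : Type*} [Fintype ι] [DecidableEq ι]
  [NormedAddCommGroup V] [InnerProductSpace ℝ V]

lemma aux_eqz {e : ι → V} (he : LinearIndependent ℝ e) {u : ι → ℤ}
    (h : ∑ i, u i • e i = 0) : ∀ i, u i = 0 := by
  have h' : ∑ i, ((u i : ℝ)) • e i = 0 := by
    rw [← h]
    exact Finset.sum_congr rfl fun i _ => Int.cast_smul_eq_zsmul ℝ (u i) (e i)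
  intro i
  exact_mod_cast Fintype.linearIndependent_iff.mp he (fun i => (u i : ℝ)) h' i

lemma aux_inj {e : ι → V} (he : LinearIndependent ℝ e) {u v : ι → ℤ}
    (h : ∑ i, u i • e i = ∑ i, v i • e i) : u = v := by
  funext i
  have h0 : ∑ i, (u i - v i) • e i = 0 := by
    simp only [sub_smul, Finset.sum_sub_distrib, h, sub_self]
  have := aux_eqz he h0 i
  omega

lemma aux_span_mem {e : ι → V} {x : V} :
    x ∈ Submodule.span ℤ (Set.range e) ↔ ∃ u : ι → ℤ, x = ∑ i, u i • e i := by
  constructor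
  · intro hx
    induction hx using Submodule.span_induction with
    | mem y hy =>
        obtain ⟨i, rfl⟩ := hy
        exact ⟨Pi.single i 1, by simp [Pi.single_apply, ite_smul]⟩
    | zero => exact ⟨0, by simp⟩
    | add x y hx hy ihx ihy =>
        obtain ⟨u, rfl⟩ := ihx; obtain ⟨v, rfl⟩ := ihy
        exact ⟨u + v, by simp [add_smul, Finset.sum_add_distrib]⟩
    | smul c x hx ihx =>
        obtain ⟨u, rfl⟩ := ihx
        exact ⟨c • u, by simp [Finset.smul_sum, mul_smul]⟩
  · rintro ⟨u, rfl⟩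
    exact Submodule.sum_mem _ fun i _ =>
      Submodule.smul_mem _ _ (Submodule.subset_span ⟨i, rfl⟩)

lemma aux_spanI_mem {e : ι → V} (I : Finset ι) {x : V} :
    x ∈ Submodule.span ℤ (e '' (I : Set ι)) ↔
      ∃ u : ι → ℤ, (∀ j, j ∉ I → u j = 0) ∧ x = ∑ i, u i • e i := by
  constructor
  · intro hx
    induction hx using Submodule.span_induction with
    | mem y hy =>
        obtain ⟨i, hi, rfl⟩ := hy
        refine ⟨Pi.single i 1, fun j hj => ?_, by simp [Pi.single_apply, ite_smul]⟩
        rw [Pi.single_apply, if_neg]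
        · rintro rfl; exact hj hi
    | zero => exact ⟨0, fun _ _ => rfl, by simp⟩
    | add x y hx hy ihx ihy =>
        obtain ⟨u, hu, rfl⟩ := ihx; obtain ⟨v, hv, rfl⟩ := ihy
        exact ⟨u + v, fun j hj => by simp [hu j hj, hv j hj],
          by simp [add_smul, Finset.sum_add_distrib]⟩
    | smul c x hx ihx =>
        obtain ⟨u, hu, rfl⟩ := ihx
        exact ⟨c • u, fun j hj => by simp [hu j hj], by simp [Finset.smul_sum, mul_smul]⟩
  · rintro ⟨u, hu, rfl⟩
    refine Submodule.sum_mem _ fun i _ => ?_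
    by_cases hi : i ∈ I
    · exact Submodule.smul_mem _ _ (Submodule.subset_span ⟨i, hi, rfl⟩)
    · simp [hu i hi]

lemma aux_gcd_div {α : Type*} [DecidableEq α] (s : Finset α) (f : α → ℕ) (K : ℕ)
    (h : ∀ j ∈ s, K ∣ f j) : s.gcd (fun j => f j / K) * K = s.gcd f := by
  induction s using Finset.induction_on with
  | empty => simp
  | @insert b s hb ih =>
      have h1 : K ∣ f b := h b (Finset.mem_insert_self b s)
      have ih' := ih fun j hj => h j (Finset.mem_insert_of_mem hj)
      rw [Finset.gcd_insert, Finset.gcd_insert]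
      calc gcd (f b / K) (s.gcd fun j => f j / K) * K
          = Nat.gcd (f b / K * K) ((s.gcd fun j => f j / K) * K) := by
            rw [Nat.gcd_mul_right]; rfl
        _ = gcd (f b) (s.gcd f) := by rw [Nat.div_mul_cancel h1, ih']; rfl

end Aux

/-- Let `Φ` be an irreducible root system with extended simple roots `Δ̃` (modeled by
`Option ι`: `some i ↦ a i` and `none ↦ −d` the extended node) and coroot integers
`g_a` (with value `1` at the extended node) satisfying `∑_{a∈Δ̃} g_a a^∨ = 0`. Let
`Ĩ ⊊ Δ̃`, let `Q^∨` be the full coroot lattice (spanned over `ℤ` by the simple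
coroots) and `Q^∨_Ĩ` the sublattice spanned by `{a^∨ : a ∈ Ĩ}`. Then the torsion
subgroup of `Q^∨/Q^∨_Ĩ` is cyclic of order `k = gcd{g_a : a ∉ Ĩ}`, generated by the
class of `ζ = −(1/k) ∑_{a∈Ĩ} g_a a^∨`. -/
theorem torsion_corootLattice_quotient {ι : Type*} [Fintype ι] [DecidableEq ι]
    [NormedAddCommGroup V] [InnerProductSpace ℝ V]
    (Φ : Set V) (hΦ : IsRootSystem Φ) (hirr : IsIrreducibleRS Φ) (hred : IsReducedRS Φ)
    (a : ι → V) (haΦ : ∀ i, a i ∈ Φ) (hinj : Function.Injective a)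
    (hind : LinearIndependent ℝ a)
    (hbase : ∀ b ∈ Φ, (∃ c : ι → ℕ, b = ∑ i, (c i : ℝ) • a i) ∨
      (∃ c : ι → ℕ, b = -∑ i, (c i : ℝ) • a i))
    (d : V) (hd : d ∈ Φ)
    (hhigh : ∀ b ∈ Φ, ∃ c : ι → ℕ, d - b = ∑ i, (c i : ℝ) • a i)
    (g : ι → ℕ) (hgpos : ∀ i, 0 < g i)
    (hrel : coroot d = ∑ i, (g i : ℝ) • coroot (a i))
    (Itil : Finset (Option ι)) (hproper : Itil ≠ Finset.univ)
    (Q : Submodule ℤ V) (hQ : Q = Submodule.span ℤ (Set.range fun i => coroot (a i)))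
    (N : Submodule ℤ ↥Q)
    (hN : N = (Submodule.span ℤ
        ((fun o : Option ι => coroot (Option.elim o (-d) a)) '' (Itil : Set (Option ι)))).comap
      Q.subtype)
    (k : ℕ) (hk : k = (Finset.univ \ Itil).gcd (fun o => Option.elim o 1 g))
    (ζ : V) (hζ : ζ = -((k : ℝ)⁻¹) •
      ∑ o ∈ Itil, ((Option.elim o 1 g : ℕ) : ℝ) • coroot (Option.elim o (-d) a)) :
    ∃ z : ↥Q, (z : V) = ζ ∧
      addOrderOf (Submodule.Quotient.mk z : ↥Q ⧸ N) = k ∧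
      Submodule.torsion ℤ (↥Q ⧸ N) =
        Submodule.span ℤ {(Submodule.Quotient.mk z : ↥Q ⧸ N)} := by
  classical
  -- basic notation
  set e : ι → V := fun i => coroot (a i) with he_def
  have hQ' : Q = Submodule.span ℤ (Set.range e) := hQ
  have hli : LinearIndependent ℝ e := by
    have h2 : ∀ i, (2 / ⟪a i, a i⟫ : ℝ) ≠ 0 := by
      intro i
      have hai : a i ≠ 0 := fun h => hΦ.2.1 (h ▸ haΦ i)
      have hinn : ⟪a i, a i⟫ ≠ 0 := fun h => hai (inner_self_eq_zero.mp h)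
      exact div_ne_zero two_ne_zero hinn
    have h3 : e = (fun i => Units.mk0 _ (h2 i)) • a := by
      funext i
      simp [he_def, coroot, Units.smul_def]
    rw [h3]
    exact hind.units_smul _
  have hcnone : coroot (-d) = -coroot d := by
    simp [coroot, inner_neg_neg, smul_neg]
  have hGF : coroot d = ∑ i, (g i : ℤ) • e i := by
    rw [hrel]
    refine Finset.sum_congr rfl fun i _ => ?_
    rw [← Int.cast_smul_eq_zsmul ℝ ((g i : ℤ)) (e i)]
    norm_num
    rfl
  set I : Finset ι := Finset.univ.filter (fun i => some i ∈ Itil) with hI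
  set J : Finset ι := Finset.univ.filter (fun i => some i ∉ Itil) with hJ
  have hIJ : ∀ j, j ∉ I ↔ j ∈ J := by intro j; simp [hI, hJ]
  have hNmem : ∀ y : ↥Q, y ∈ N ↔ (y : V) ∈ Submodule.span ℤ
      ((fun o : Option ι => coroot (Option.elim o (-d) a)) '' (Itil : Set (Option ι))) := by
    intro y; rw [hN]; exact Iff.rfl
  by_cases hnone : none ∈ Itil
  · -- Case B : none ∈ Itil
    have hJm : Finset.univ \ Itil = J.image some := by
      ext o
      cases o with
      | none => simp [hnone]
      | some i => simp [hJ]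
    have hkK : k = J.gcd g := by
      rw [hk, hJm, Finset.gcd_image]
      rfl
    obtain ⟨j₀, hj₀⟩ : ∃ j, j ∈ J := by
      by_contra h
      push_neg at h
      apply hproper
      apply Finset.eq_univ_iff_forall.mpr
      intro o
      cases o with
      | none => exact hnone
      | some i =>
          have hi := h i
          simp [hJ] at hi
          exact hi
    have hKd : ∀ j ∈ J, k ∣ g j := by
      intro j hj
      rw [hkK]
      exact Finset.gcd_dvd hj
    have hK0 : k ≠ 0 := by
      intro h
      rw [hkK] at h
      exact (hgpos j₀).ne' (Finset.gcd_eq_zero_iff.mp h j₀ hj₀)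
    set w : ι → ℤ := fun j => if j ∈ J then ((g j / k : ℕ) : ℤ) else 0 with hwdef
    have hKw : ∀ j ∈ J, (k : ℤ) * w j = (g j : ℤ) := by
      intro j hj
      rw [hwdef]
      simp only [if_pos hj]
      exact_mod_cast Nat.mul_div_cancel' (hKd j hj)
    have hw0 : ∀ j ∈ J, w j ≠ 0 := by
      intro j hj h0
      have h1 := hKw j hj
      rw [h0, mul_zero] at h1
      have : g j = 0 := by exact_mod_cast h1.symm
      exact (hgpos j).ne' this
    have hcimB : ((fun o : Option ι => coroot (Option.elim o (-d) a)) ''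
        (Itil : Set (Option ι))) = insert (-coroot d) (e '' (I : Set ι)) := by
      ext x
      constructor
      · rintro ⟨o, ho, rfl⟩
        cases o with
        | none => exact Set.mem_insert_iff.mpr (Or.inl hcnone)
        | some i => exact Set.mem_insert_iff.mpr (Or.inr ⟨i, by simpa [hI] using ho, rfl⟩)
      · intro hx
        rcases Set.mem_insert_iff.mp hx with rfl | ⟨i, hi, rfl⟩
        · exact ⟨none, hnone, hcnone⟩
        · exact ⟨some i, by simpa [hI] using hi, rfl⟩
    have hSmem : ∀ x : V, x ∈ Submodule.span ℤ
        ((fun o : Option ι => coroot (Option.elim o (-d) a)) '' (Itil : Set (Option ι))) ↔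
        ∃ (m : ℤ) (u : ι → ℤ), (∀ j, j ∉ I → u j = 0) ∧
          x + m • coroot d = ∑ i, u i • e i := by
      intro x
      rw [hcimB, Submodule.span_insert, Submodule.mem_sup]
      constructor
      · rintro ⟨y, hy, zz, hz, rfl⟩
        obtain ⟨m, rfl⟩ := Submodule.mem_span_singleton.mp hy
        obtain ⟨u, hu, hzz⟩ := (aux_spanI_mem I).mp hz
        refine ⟨m, u, hu, ?_⟩
        rw [← hzz, smul_neg]
        abel
      · rintro ⟨m, u, hu, hx⟩
        refine ⟨m • (-coroot d), Submodule.mem_span_singleton.mpr ⟨m, rfl⟩,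
          x + m • coroot d, (aux_spanI_mem I).mpr ⟨u, hu, hx⟩, ?_⟩
        rw [smul_neg]
        abel
    have htot : ∑ o : Option ι, ((Option.elim o 1 g : ℕ) : ℝ) • coroot (Option.elim o (-d) a)
        = 0 := by
      rw [Fintype.sum_option]
      have h1 : ((Option.elim (none : Option ι) 1 g : ℕ) : ℝ) •
          coroot (Option.elim (none : Option ι) (-d) a) = -coroot d := by
        show ((1 : ℕ) : ℝ) • coroot (-d) = -coroot d
        rw [hcnone]
        simp
      have h2 : ∑ i : ι, ((Option.elim (some i) 1 g : ℕ) : ℝ) •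
          coroot (Option.elim (some i) (-d) a) = coroot d := by
        rw [hrel]
        exact Finset.sum_congr rfl fun i _ => rfl
      rw [h1, h2]
      abel
    have hsplit : ∑ o ∈ Itil, ((Option.elim o 1 g : ℕ) : ℝ) • coroot (Option.elim o (-d) a)
        = -∑ j ∈ J, (g j : ℝ) • e j := by
      have hs := Finset.sum_sdiff (f := fun o => ((Option.elim o 1 g : ℕ) : ℝ) •
        coroot (Option.elim o (-d) a)) (Finset.subset_univ Itil)
      have hJ2 : ∑ o ∈ Finset.univ \ Itil, ((Option.elim o 1 g : ℕ) : ℝ) •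
          coroot (Option.elim o (-d) a) = ∑ j ∈ J, (g j : ℝ) • e j := by
        rw [hJm, Finset.sum_image (fun x _ y _ h => Option.some_injective ι h)]
        rfl
      rw [hJ2, htot, add_comm] at hs
      exact eq_neg_of_add_eq_zero_left hs
    have hζB : ζ = ∑ i, w i • e i := by
      rw [hζ, hsplit, neg_smul_neg, Finset.smul_sum]
      have hR : ∑ j ∈ J, w j • e j = ∑ i, w i • e i :=
        Finset.sum_subset (Finset.subset_univ J) (fun i _ hi => by simp [hwdef, hi])
      rw [← hR]
      refine Finset.sum_congr rfl fun j hj => ?_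
      rw [smul_smul, ← Int.cast_smul_eq_zsmul ℝ (w j) (e j)]
      congr 1
      rw [hwdef]
      simp only [if_pos hj]
      have hk' : (k : ℝ) ≠ 0 := Nat.cast_ne_zero.mpr hK0
      have hcast : (((g j / k : ℕ) : ℤ) : ℝ) * (k : ℝ) = (g j : ℝ) := by
        exact_mod_cast congrArg (Nat.cast (R := ℝ)) (Nat.div_mul_cancel (hKd j hj))
      rw [← hcast, mul_comm (((g j / k : ℕ) : ℤ) : ℝ) (k : ℝ), ← mul_assoc,
        inv_mul_cancel₀ hk', one_mul]
    have hζQ : ζ ∈ Q := by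
      rw [hQ']
      exact aux_span_mem.mpr ⟨w, hζB⟩
    have hdvdK : ∀ n : ℕ, n • (Submodule.Quotient.mk (⟨ζ, hζQ⟩ : ↥Q) : ↥Q ⧸ N) = 0 →
        k ∣ n := by
      intro n hn
      have h1 : ((n : ℤ) • ζ) ∈ Submodule.span ℤ
          ((fun o : Option ι => coroot (Option.elim o (-d) a)) '' (Itil : Set (Option ι))) := by
        have h2 : (n : ℤ) • (⟨ζ, hζQ⟩ : ↥Q) ∈ N := by
          rw [← Submodule.Quotient.mk_eq_zero, Submodule.Quotient.mk_smul,
            Nat.cast_smul_eq_nsmul]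
          exact hn
        have h3 := (hNmem _).mp h2
        simpa using h3
      obtain ⟨m, u, hu, heq⟩ := (hSmem _).mp h1
      have hL : (n : ℤ) • ζ + m • coroot d = ∑ i, ((n : ℤ) * w i + m * (g i : ℤ)) • e i := by
        rw [hζB, hGF, Finset.smul_sum, Finset.smul_sum, ← Finset.sum_add_distrib]
        exact Finset.sum_congr rfl fun i _ => by rw [add_smul, smul_smul, smul_smul]
      have heq2 : (fun i => (n : ℤ) * w i + m * (g i : ℤ)) = u :=
        aux_inj hli (by rw [← hL, heq])
      have hj0 : (n : ℤ) * w j₀ + m * (g j₀ : ℤ) = 0 := by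
        rw [congrFun heq2 j₀]
        exact hu j₀ ((hIJ j₀).mpr hj₀)
      have h4 : ((n : ℤ) + m * k) * w j₀ = 0 := by
        have h5 := hKw j₀ hj₀
        linear_combination hj0 + m * h5
      have h6 := (mul_eq_zero.mp h4).resolve_right (hw0 j₀ hj₀)
      have h7 : (k : ℤ) ∣ (n : ℤ) := ⟨-m, by linarith⟩
      exact_mod_cast h7
    have hKz : k • (Submodule.Quotient.mk (⟨ζ, hζQ⟩ : ↥Q) : ↥Q ⧸ N) = 0 := by
      rw [← Nat.cast_smul_eq_nsmul ℤ, ← Submodule.Quotient.mk_smul,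
        Submodule.Quotient.mk_eq_zero, hNmem]
      have hco : (((k : ℤ) • (⟨ζ, hζQ⟩ : ↥Q) : ↥Q) : V) = (k : ℤ) • ζ := rfl
      rw [hco]
      refine (hSmem _).mpr ⟨-1, fun i => (k : ℤ) * w i - (g i : ℤ), ?_, ?_⟩
      · intro j hj
        show (k : ℤ) * w j - (g j : ℤ) = 0
        rw [hKw j ((hIJ j).mp hj)]
        ring
      · rw [hζB, hGF, Finset.smul_sum, Finset.smul_sum, ← Finset.sum_add_distrib]
        refine Finset.sum_congr rfl fun i _ => ?_
        rw [smul_smul, smul_smul, sub_smul, neg_one_mul, neg_smul]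
        abel
    refine ⟨⟨ζ, hζQ⟩, rfl, ?_, ?_⟩
    · exact Nat.dvd_antisymm (addOrderOf_dvd_of_nsmul_eq_zero hKz)
        (hdvdK _ (addOrderOf_nsmul_eq_zero _))
    · apply le_antisymm
      · intro x hx
        obtain ⟨y, rfl⟩ := Submodule.Quotient.mk_surjective N x
        obtain ⟨nn, hn⟩ := (Submodule.mem_torsion_iff _).mp hx
        have hn0 : (nn : ℤ) ≠ 0 := nonZeroDivisors.ne_zero nn.2
        obtain ⟨u, hu⟩ := aux_span_mem.mp (show (y : V) ∈ _ by rw [← hQ']; exact y.2)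
        have h1 : ((nn : ℤ) • (y : V)) ∈ Submodule.span ℤ
            ((fun o : Option ι => coroot (Option.elim o (-d) a)) ''
              (Itil : Set (Option ι))) := by
          have h2 : (nn : ℤ) • y ∈ N := by
            rwa [← Submodule.Quotient.mk_eq_zero, Submodule.Quotient.mk_smul]
          have h3 := (hNmem _).mp h2
          simpa using h3
        obtain ⟨m, u', hu', heq⟩ := (hSmem _).mp h1
        have hL : (nn : ℤ) • (y : V) + m • coroot d
            = ∑ i, ((nn : ℤ) * u i + m * (g i : ℤ)) • e i := by
          rw [hu, hGF, Finset.smul_sum, Finset.smul_sum, ← Finset.sum_add_distrib]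
          exact Finset.sum_congr rfl fun i _ => by rw [add_smul, smul_smul, smul_smul]
        have heq2 : (fun i => (nn : ℤ) * u i + m * (g i : ℤ)) = u' :=
          aux_inj hli (by rw [← hL, heq])
        have hJ0 : ∀ j ∈ J, (nn : ℤ) * u j = (m * k) * (-(w j)) := by
          intro j hj
          have h3 : (nn : ℤ) * u j + m * (g j : ℤ) = 0 := by
            rw [congrFun heq2 j]
            exact hu' j ((hIJ j).mpr hj)
          have h4 := hKw j hj
          linear_combination h3 + m * h4
        have hdA : ∀ j ∈ J, (nn : ℤ).natAbs ∣ (m * k).natAbs * (g j / k) := by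
          intro j hj
          have h5 : (nn : ℤ) ∣ (m * k) * (w j) := ⟨-(u j), by linear_combination hJ0 j hj⟩
          have h6 := Int.natAbs_dvd_natAbs.mpr h5
          rwa [Int.natAbs_mul, (show (w j).natAbs = g j / k by
            rw [hwdef]; simp only [if_pos hj, Int.natAbs_natCast])] at h6
        have hgcd1 : J.gcd (fun j => g j / k) = 1 := by
          have h6 := aux_gcd_div J g k hKd
          have h7 : J.gcd (fun j => g j / k) * k = 1 * k := by
            rw [h6, ← hkK, one_mul]
          exact Nat.eq_of_mul_eq_mul_right (Nat.pos_of_ne_zero hK0) h7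
        have hdvd : (nn : ℤ).natAbs ∣ (m * k).natAbs := by
          have h8 : (nn : ℤ).natAbs ∣ J.gcd (fun j => (m * k).natAbs * (g j / k)) :=
            Finset.dvd_gcd fun j hj => hdA j hj
          rwa [Finset.gcd_mul_left, normalize_eq, hgcd1, mul_one] at h8
        obtain ⟨q, hq⟩ := Int.natAbs_dvd_natAbs.mp hdvd
        have huw : ∀ j ∈ J, u j = (-q) * w j := by
          intro j hj
          have h9 := hJ0 j hj
          rw [hq] at h9
          have h10 : (nn : ℤ) * u j = (nn : ℤ) * ((-q) * w j) := by linear_combination h9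
          exact mul_left_cancel₀ hn0 h10
        refine Submodule.mem_span_singleton.mpr ⟨-q, ?_⟩
        rw [← Submodule.Quotient.mk_smul, Submodule.Quotient.eq]
        rw [hNmem]
        refine (hSmem _).mpr ⟨0, fun i => (-q) * w i - u i, ?_, ?_⟩
        · intro j hj
          show (-q) * w j - u j = 0
          rw [huw j ((hIJ j).mp hj)]
          ring
        · have hco : (((-q) • (⟨ζ, hζQ⟩ : ↥Q) - y : ↥Q) : V) = (-q) • ζ - (y : V) := by
            simp
          rw [hco, zero_smul, add_zero, hζB, hu, Finset.smul_sum, ← Finset.sum_sub_distrib]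
          exact Finset.sum_congr rfl fun i _ => by rw [sub_smul, smul_smul]
      · rw [Submodule.span_le, Set.singleton_subset_iff]
        refine (Submodule.mem_torsion_iff _).mpr
          ⟨⟨(k : ℤ), mem_nonZeroDivisors_of_ne_zero (by exact_mod_cast hK0)⟩, ?_⟩
        show (k : ℤ) • (Submodule.Quotient.mk (⟨ζ, hζQ⟩ : ↥Q) : ↥Q ⧸ N) = 0
        rw [Nat.cast_smul_eq_nsmul]
        exact hKz

  · -- Case A : none ∉ Itil, k = 1
    have hIm : Itil = I.image some := by
      ext o
      cases o with
      | none => simp [hnone]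
      | some i => simp [hI]
    have hk1 : k = 1 := by
      rw [hk]
      have h1 : (Finset.univ \ Itil).gcd (fun o => Option.elim o 1 g) ∣ 1 := by
        have : (none : Option ι) ∈ Finset.univ \ Itil := by simp [hnone]
        simpa using Finset.gcd_dvd (f := fun o : Option ι => Option.elim o 1 g) this
      exact Nat.dvd_one.mp h1
    have hcimA : ((fun o : Option ι => coroot (Option.elim o (-d) a)) ''
        (Itil : Set (Option ι))) = e '' (I : Set ι) := by
      rw [hIm, Finset.coe_image, ← Set.image_comp]
      rfl
    set uA : ι → ℤ := fun i => if i ∈ I then -(g i : ℤ) else 0 with huA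
    have hsumA : ∑ o ∈ Itil, ((Option.elim o 1 g : ℕ) : ℝ) • coroot (Option.elim o (-d) a)
        = ∑ i ∈ I, (g i : ℝ) • e i := by
      rw [hIm, Finset.sum_image (fun x _ y _ h => Option.some_injective ι h)]
      rfl
    have hζA : ζ = ∑ i, uA i • e i := by
      rw [hζ, hk1, hsumA]
      have : ∀ i, uA i • e i = if i ∈ I then -((g i : ℝ) • e i) else 0 := by
        intro i
        by_cases hi : i ∈ I
        · rw [huA]; simp only [hi, if_true, if_pos]
          rw [← Int.cast_smul_eq_zsmul ℝ (-(g i : ℤ)) (e i)]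
          push_cast
          rw [neg_smul]
        · simp [huA, hi]
      rw [Finset.sum_congr rfl (fun i _ => this i), Finset.sum_ite_mem,
        Finset.univ_inter, Finset.sum_neg_distrib]
      norm_num
    have hζQ : ζ ∈ Q := by
      rw [hQ']
      exact aux_span_mem.mpr ⟨uA, hζA⟩
    refine ⟨⟨ζ, hζQ⟩, rfl, ?_, ?_⟩
    · -- order
      have hzN : (⟨ζ, hζQ⟩ : ↥Q) ∈ N := by
        rw [hNmem, hcimA]
        exact (aux_spanI_mem I).mpr ⟨uA, fun j hj => by simp [huA, hj], hζA⟩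
      have hmk0 : (Submodule.Quotient.mk (⟨ζ, hζQ⟩ : ↥Q) : ↥Q ⧸ N) = 0 :=
        (Submodule.Quotient.mk_eq_zero _).mpr hzN
      rw [hmk0, addOrderOf_zero, hk1]
    · -- torsion
      have hzN : (⟨ζ, hζQ⟩ : ↥Q) ∈ N := by
        rw [hNmem, hcimA]
        exact (aux_spanI_mem I).mpr ⟨uA, fun j hj => by simp [huA, hj], hζA⟩
      have hmk0 : (Submodule.Quotient.mk (⟨ζ, hζQ⟩ : ↥Q) : ↥Q ⧸ N) = 0 :=
        (Submodule.Quotient.mk_eq_zero _).mpr hzN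
      rw [hmk0, Submodule.span_zero_singleton, eq_bot_iff]
      rintro x hx
      obtain ⟨y, rfl⟩ := Submodule.Quotient.mk_surjective N x
      obtain ⟨n, hn⟩ := (Submodule.mem_torsion_iff _).mp hx
      have hn0 : (n : ℤ) ≠ 0 := nonZeroDivisors.ne_zero n.2
      obtain ⟨u, hu⟩ := aux_span_mem.mp (show (y : V) ∈ _ by rw [← hQ']; exact y.2)
      have hmem : ((n : ℤ) • (y : V)) ∈ Submodule.span ℤ (e '' (I : Set ι)) := by
        have h1 : (n : ℤ) • y ∈ N := by
          rwa [← Submodule.Quotient.mk_eq_zero, Submodule.Quotient.mk_smul]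
        have h2 := (hNmem _).mp h1
        rw [← hcimA]
        simpa using h2
      have hsum : (n : ℤ) • (y : V) = ∑ i, ((n : ℤ) * u i) • e i := by
        rw [hu, Finset.smul_sum]
        exact Finset.sum_congr rfl fun i _ => (mul_smul _ _ _).symm
      obtain ⟨p, hp, hpe⟩ := (aux_spanI_mem I).mp hmem
      have heq : (fun i => (n : ℤ) * u i) = p := aux_inj hli (by rw [← hsum, hpe])
      have husupp : ∀ j, j ∉ I → u j = 0 := by
        intro j hj
        have : (n : ℤ) * u j = 0 := by rw [congrFun heq j]; exact hp j hj
        exact (mul_eq_zero.mp this).resolve_left hn0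
      have : y ∈ N := by
        rw [hNmem, hcimA]
        exact (aux_spanI_mem I).mpr ⟨u, husupp, hu⟩
      simpa [Submodule.mem_bot] using (Submodule.Quotient.mk_eq_zero _).mpr this
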